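/- Let G be a group, K ≤ G a subgroup, and n a positive integer such that G = K·ζ_n(G). Then γ_{n+1}(G) = γ_{n+1}(K). -/

import Mathlib

open Subgroup
open scoped commutatorElement

/-- Generalized three subgroups lemma: if `H` is normal and two rotations of the
triple commutator land in `H`, so does the third. -/
private lemma three_subgroups {G : Type*} [Group G] {A B C H : Subgroup G} [H.Normal]
    (h1 : ⁅⁅B, C⁆, A⁆ ≤ H) (h2 : ⁅⁅C, A⁆, B⁆ ≤ H) : ⁅⁅A, B⁆, C⁆ ≤ H := by
  let π := QuotientGroup.mk' H
  have key : ∀ {X Y Z : Subgroup G}, ⁅⁅X, Y⁆, Z⁆ ≤ H ↔ ⁅⁅X.map π, Y.map π⁆, Z.map π⁆ = ⊥ := by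
    intro X Y Z
    rw [← map_commutator, ← map_commutator, Subgroup.map_eq_bot_iff,
      QuotientGroup.ker_mk']
  exact key.mpr (commutator_commutator_eq_bot_of_rotate (key.mp h1) (key.mp h2))

/-- `⁅⊤, ζ_m(G)⁆ ≤ ζ_{m-1}(G)`. -/
private lemma comm_top_ucs (G : Type*) [Group G] (m : ℕ) :
    ⁅(⊤ : Subgroup G), Subgroup.upperCentralSeries G m⁆ ≤ Subgroup.upperCentralSeries G (m - 1) := by
  cases m with
  | zero =>
    rw [Subgroup.upperCentralSeries_zero, commutator_bot_right]
  | succ k =>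
    rw [commutator_le]
    intro g _ z hz
    have h := Subgroup.mem_upperCentralSeries_succ_iff.mp hz g
    have hgz : ⁅g, z⁆ = (z * g * z⁻¹ * g⁻¹)⁻¹ := by group
    rw [Nat.succ_sub_one, hgz]
    exact inv_mem h

/-- `⁅γ_{i+1}(G), ζ_m(G)⁆ ≤ ζ_{m-(i+1)}(G)`. -/
private lemma comm_lcs_ucs (G : Type*) [Group G] (i : ℕ) :
    ∀ m : ℕ, ⁅(⊤ : Subgroup G).lowerCentralSeries i, Subgroup.upperCentralSeries G m⁆ ≤
      Subgroup.upperCentralSeries G (m - (i + 1)) := by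
  induction i with
  | zero => simpa using comm_top_ucs G
  | succ i ih =>
    intro m
    show ⁅⁅(⊤ : Subgroup G).lowerCentralSeries i, ⊤⁆, Subgroup.upperCentralSeries G m⁆ ≤ _
    have h1 : ⁅⁅(⊤ : Subgroup G), Subgroup.upperCentralSeries G m⁆, (⊤ : Subgroup G).lowerCentralSeries i⁆ ≤
        Subgroup.upperCentralSeries G (m - (i + 1 + 1)) := by
      calc ⁅⁅(⊤ : Subgroup G), Subgroup.upperCentralSeries G m⁆, (⊤ : Subgroup G).lowerCentralSeries i⁆
          = ⁅(⊤ : Subgroup G).lowerCentralSeries i, ⁅(⊤ : Subgroup G), Subgroup.upperCentralSeries G m⁆⁆ :=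
            commutator_comm _ _
        _ ≤ ⁅(⊤ : Subgroup G).lowerCentralSeries i, Subgroup.upperCentralSeries G (m - 1)⁆ :=
            commutator_mono le_rfl (comm_top_ucs G m)
        _ ≤ Subgroup.upperCentralSeries G (m - 1 - (i + 1)) := ih _
        _ = Subgroup.upperCentralSeries G (m - (i + 1 + 1)) := by congr 1; omega
    have h2 : ⁅⁅Subgroup.upperCentralSeries G m, (⊤ : Subgroup G).lowerCentralSeries i⁆, (⊤ : Subgroup G)⁆ ≤
        Subgroup.upperCentralSeries G (m - (i + 1 + 1)) := by
      calc ⁅⁅Subgroup.upperCentralSeries G m, (⊤ : Subgroup G).lowerCentralSeries i⁆, (⊤ : Subgroup G)⁆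
          = ⁅(⊤ : Subgroup G), ⁅(⊤ : Subgroup G).lowerCentralSeries i, Subgroup.upperCentralSeries G m⁆⁆ := by
            rw [commutator_comm ((⊤ : Subgroup G).lowerCentralSeries i)]
            exact commutator_comm _ _
        _ ≤ ⁅(⊤ : Subgroup G), Subgroup.upperCentralSeries G (m - (i + 1))⁆ :=
            commutator_mono le_rfl (ih m)
        _ ≤ Subgroup.upperCentralSeries G (m - (i + 1) - 1) := comm_top_ucs G _
        _ = Subgroup.upperCentralSeries G (m - (i + 1 + 1)) := by rw [Nat.sub_sub]
    exact three_subgroups h1 h2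

/-- **Hekster's lemma, part 1.** If `G = K·ζ_n(G)` then
`γ_{n+1}(G) = γ_{n+1}(K)` (the latter viewed as a subgroup of `G`).
In Mathlib's indexing `γ_{n+1}` is `lowerCentralSeries · n`. -/
theorem hekster_lowerCentral (G : Type*) [Group G] (K : Subgroup G) (n : ℕ)
    (hn : 0 < n)
    (hKZ : ∀ g : G, ∃ k ∈ K, ∃ z ∈ _root_.upperCentralSeries G n, g = k * z) :
    (⊤ : Subgroup G).lowerCentralSeries n =
      Subgroup.map K.subtype ((⊤ : Subgroup K).lowerCentralSeries n) := by
  refine le_antisymm ?_ (Subgroup.lowerCentralSeries_map_subtype_le K n)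
  -- key claim: γ_{i+1}(G) ≤ γ_{i+1}(K) ⊔ ζ_{n-i}(G)
  have claim : ∀ i : ℕ, (⊤ : Subgroup G).lowerCentralSeries i ≤
      ((⊤ : Subgroup K).lowerCentralSeries i).map K.subtype ⊔ Subgroup.upperCentralSeries G (n - i) := by
    intro i
    induction i with
    | zero =>
      intro g _
      obtain ⟨k, hk, z, hz, rfl⟩ := hKZ g
      exact mul_mem (mem_sup_left ⟨⟨k, hk⟩, mem_top _, rfl⟩) (mem_sup_right hz)
    | succ i ih =>
      show ⁅(⊤ : Subgroup G).lowerCentralSeries i, ⊤⁆ ≤ _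
      rw [commutator_le]
      intro x hx g _
      -- decompose x = m * z with m ∈ map(γ_{i+1}(K)), z ∈ ζ_{n-i}(G)
      have hx' := ih hx
      rw [← SetLike.mem_coe, Subgroup.mul_normal] at hx'
      obtain ⟨m, hm, z, hz, rfl⟩ := hx'
      -- decompose g = k * w
      obtain ⟨k, hk, w, hw, rfl⟩ := hKZ g
      set M := ((⊤ : Subgroup K).lowerCentralSeries (i + 1)).map K.subtype with hM
      set Z := Subgroup.upperCentralSeries G (n - (i + 1)) with hZ
      have hsub : n - i - 1 = n - (i + 1) := by omega
      -- the pieces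
      have hzg : ⁅z, k * w⁆ ∈ Z := by
        have h₁ : ⁅z, k * w⁆ ∈ ⁅Subgroup.upperCentralSeries G (n - i), (⊤ : Subgroup G)⁆ :=
          commutator_mem_commutator hz (mem_top _)
        have h₂ : ⁅Subgroup.upperCentralSeries G (n - i), (⊤ : Subgroup G)⁆ ≤ Z := by
          rw [commutator_comm, hZ, ← hsub]
          exact comm_top_ucs G (n - i)
        exact h₂ h₁
      have hmk : ⁅m, k⁆ ∈ M := by
        obtain ⟨m₀, hm₀, rfl⟩ := hm
        exact ⟨⁅m₀, ⟨k, hk⟩⁆, commutator_mem_commutator hm₀ (mem_top _),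
          by simp [map_commutatorElement]⟩
      have hmw : ⁅m, w⁆ ∈ Z := by
        have hmG : m ∈ (⊤ : Subgroup G).lowerCentralSeries i :=
          Subgroup.lowerCentralSeries_map_subtype_le K i hm
        exact comm_lcs_ucs G i n (commutator_mem_commutator hmG hw)
      have key : ⁅m * z, k * w⁆ =
          (m * ⁅z, k * w⁆ * m⁻¹) * (⁅m, k⁆ * (k * ⁅m, w⁆ * k⁻¹)) := by
        simp only [commutatorElement_def]
        group
      rw [key]
      have hZnormal : Z.Normal := inferInstance
      exact mul_mem (mem_sup_right (hZnormal.conj_mem _ hzg m))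
        (mul_mem (mem_sup_left hmk) (mem_sup_right (hZnormal.conj_mem _ hmw k)))
  have h := claim n
  simpa using h
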